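/- Fix d ≥ 1 and m ≥ 1. Let a^{(1)}, …, a^{(m)} be d×d complex matrices whose τ-tensor is diagonal with nonnegative real diagonal entries λ_1, …, λ_m. Then for every m×m complex unitary matrix U, setting b^{(l)} = ∑_{k=1}^{m} U_{lk} a^{(k)}, one has ∑_{l=1}^{m} d·|det b^{(l)}|^{2/d} ≤ ∑_{k=1}^{m} λ_k^{2/d}, and equality holds when U is the identity matrix. In other words, the supremum over all unitaries U of the total G-concurrence ∑_l d·|det b^{(l)}|^{2/d} equals ∑_{k=1}^{m} λ_k^{2/d}. -/

import Mathlib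

open scoped BigOperators Matrix

/-- The τ-tensor of a family `a : Fin m → Matrix (Fin d) (Fin d) ℂ`:
`τ^a_{k₁…k_d} = (d^{d/2} / d!) ∑_{σ ∈ S_d} det (M(σ))`, where the `i`-th row of `M(σ)`
is the `i`-th row of `a (k (σ i))`. -/
noncomputable def tauTensor (d m : ℕ) (a : Fin m → Matrix (Fin d) (Fin d) ℂ)
    (k : Fin d → Fin m) : ℂ :=
  (((Real.sqrt d ^ d / d.factorial : ℝ)) : ℂ) *
    ∑ σ : Equiv.Perm (Fin d), (Matrix.of fun i j => a (k (σ i)) i j).det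

private lemma rpow_sum_le_sum_rpow' {ι : Type*} (s : Finset ι) (f : ι → ℝ)
    (hf : ∀ i ∈ s, 0 ≤ f i) {p : ℝ} (hp : 0 < p) (hp1 : p ≤ 1) :
    (∑ i ∈ s, f i) ^ p ≤ ∑ i ∈ s, f i ^ p := by
  induction s using Finset.cons_induction with
  | empty => simp [Real.zero_rpow hp.ne']
  | cons a s ha ih =>
    simp only [Finset.sum_cons]
    have h1 : 0 ≤ f a := hf a (Finset.mem_cons_self a s)
    have h2 : 0 ≤ ∑ i ∈ s, f i := Finset.sum_nonneg fun i hi => hf i (Finset.mem_cons_of_mem hi)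
    have key : (f a + ∑ i ∈ s, f i) ^ p ≤ f a ^ p + (∑ i ∈ s, f i) ^ p := by
      have := NNReal.rpow_add_le_add_rpow ⟨f a, h1⟩ ⟨_, h2⟩ hp.le hp1
      have h' := NNReal.coe_le_coe.2 this
      exact h'
    refine key.trans ?_
    gcongr
    exact ih fun i hi => hf i (Finset.mem_cons_of_mem hi)

private lemma det_sum_smul (d m : ℕ) (a : Fin m → Matrix (Fin d) (Fin d) ℂ) (u : Fin m → ℂ) :
    (∑ c : Fin m, u c • a c).det
      = ∑ k : Fin d → Fin m, (∏ i, u (k i)) * (Matrix.of fun i j => a (k i) i j).det := by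
  have h1 : (∑ c : Fin m, u c • a c).det
      = Matrix.detRowAlternating (fun i => ∑ c : Fin m, u c • (a c i)) := by
    congr 1
    ext i j
    simp [Matrix.sum_apply]
  rw [h1]
  have h2 := (Matrix.detRowAlternating (R := ℂ) (n := Fin d)).toMultilinearMap.map_sum
    (g := fun i c => u c • a c i)
  simp only [AlternatingMap.coe_multilinearMap] at h2
  rw [h2]
  refine Finset.sum_congr rfl fun k _ => ?_
  have := (Matrix.detRowAlternating (R := ℂ) (n := Fin d)).toMultilinearMap.map_smul_univ
    (fun i => u (k i)) (fun i => a (k i) i)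
  simp only [AlternatingMap.coe_multilinearMap] at this
  rw [this]
  simp only [smul_eq_mul]
  rfl

private lemma det_formula (d m : ℕ) (hd : 1 ≤ d)
    (a : Fin m → Matrix (Fin d) (Fin d) ℂ) (lam : Fin m → ℝ)
    (hdiag : ∀ c : Fin m, tauTensor d m a (fun _ => c) = (lam c : ℂ))
    (hoff : ∀ k : Fin d → Fin m, (∃ i j, k i ≠ k j) → tauTensor d m a k = 0)
    (u : Fin m → ℂ) :
    (∑ c : Fin m, u c • a c).det * ((Real.sqrt d ^ d : ℝ) : ℂ)
      = ∑ c : Fin m, u c ^ d * (lam c : ℂ) := by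
  classical
  set D : (Fin d → Fin m) → ℂ := fun k => (Matrix.of fun i j => a (k i) i j).det with hDdef
  set P : (Fin d → Fin m) → ℂ := fun k => ∏ i, u (k i) with hPdef
  have hS : (∑ c : Fin m, u c • a c).det = ∑ k : Fin d → Fin m, P k * D k :=
    det_sum_smul d m a u
  have hsym : ∀ σ : Equiv.Perm (Fin d),
      (∑ k : Fin d → Fin m, P k * D k) = ∑ k : Fin d → Fin m, P k * D (k ∘ σ) := by
    intro σ
    have hc := Equiv.sum_comp (Equiv.arrowCongr σ (Equiv.refl (Fin m)))
      (fun k : Fin d → Fin m => P k * D (k ∘ σ))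
    rw [← hc]
    refine Finset.sum_congr rfl fun k _ => ?_
    have hcomp : (Equiv.arrowCongr σ (Equiv.refl (Fin m))) k = k ∘ σ.symm := by
      ext i; simp [Equiv.arrowCongr]
    rw [hcomp]
    have h1 : P (k ∘ σ.symm) = P k := by
      simp only [hPdef, Function.comp]
      exact Equiv.prod_comp σ.symm (fun i => u (k i))
    have h2 : (k ∘ σ.symm) ∘ σ = k := by ext i; simp
    rw [h1, h2]
  have hfact : ((d.factorial : ℝ) : ℂ) * (∑ k : Fin d → Fin m, P k * D k)
      = ∑ k : Fin d → Fin m, P k * ∑ σ : Equiv.Perm (Fin d), D (k ∘ σ) := by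
    calc ((d.factorial : ℝ) : ℂ) * ∑ k : Fin d → Fin m, P k * D k
        = ∑ _σ : Equiv.Perm (Fin d), ∑ k : Fin d → Fin m, P k * D k := by
          rw [Finset.sum_const, nsmul_eq_mul]
          congr 1
          simp [Fintype.card_perm]
      _ = ∑ σ : Equiv.Perm (Fin d), ∑ k : Fin d → Fin m, P k * D (k ∘ σ) :=
          Finset.sum_congr rfl fun σ _ => hsym σ
      _ = ∑ k : Fin d → Fin m, ∑ σ : Equiv.Perm (Fin d), P k * D (k ∘ σ) := Finset.sum_comm
      _ = ∑ k : Fin d → Fin m, P k * ∑ σ : Equiv.Perm (Fin d), D (k ∘ σ) := by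
          simp [Finset.mul_sum]
  have hfacne : ((d.factorial : ℝ) : ℂ) ≠ 0 := by
    exact_mod_cast Nat.cast_ne_zero.2 (Nat.factorial_ne_zero d)
  have htau : ∀ k : Fin d → Fin m,
      ((d.factorial : ℝ) : ℂ) * tauTensor d m a k
        = ((Real.sqrt d ^ d : ℝ) : ℂ) * ∑ σ : Equiv.Perm (Fin d), D (k ∘ σ) := by
    intro k
    show ((d.factorial : ℝ) : ℂ) *
        ((((Real.sqrt d ^ d / d.factorial : ℝ)) : ℂ) *
          ∑ σ : Equiv.Perm (Fin d), (Matrix.of fun i j => a (k (σ i)) i j).det) = _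
    rw [← mul_assoc]
    congr 1
    rw [← Complex.ofReal_mul]
    congr 1
    field_simp
  have hconst : ∑ k : Fin d → Fin m, P k * tauTensor d m a k
      = ∑ c : Fin m, u c ^ d * (lam c : ℂ) := by
    let i0 : Fin d := ⟨0, hd⟩
    let e : Fin m ↪ (Fin d → Fin m) :=
      ⟨fun c _ => c, fun c c' h => congrFun h i0⟩
    rw [← Finset.sum_subset (Finset.subset_univ (Finset.univ.map e)) ?_]
    · rw [Finset.sum_map]
      refine Finset.sum_congr rfl fun c _ => ?_
      have he : e c = fun _ => c := rfl
      rw [he, hdiag c]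
      congr 1
      simp [hPdef, Finset.prod_const]
    · intro k _ hk
      have hne : ∃ i j, k i ≠ k j := by
        by_contra h
        push_neg at h
        exact hk (Finset.mem_map.2 ⟨k i0, Finset.mem_univ _, funext fun i => (h i0 i)⟩)
      rw [hoff k hne, mul_zero]
  have key : ((d.factorial : ℝ) : ℂ) *
      ((∑ c : Fin m, u c • a c).det * ((Real.sqrt d ^ d : ℝ) : ℂ))
      = ((d.factorial : ℝ) : ℂ) * ∑ c : Fin m, u c ^ d * (lam c : ℂ) := by
    rw [hS]
    calc ((d.factorial : ℝ) : ℂ) * ((∑ k : Fin d → Fin m, P k * D k) * ((Real.sqrt d ^ d : ℝ) : ℂ))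
        = (∑ k : Fin d → Fin m, P k * ∑ σ : Equiv.Perm (Fin d), D (k ∘ σ)) *
            ((Real.sqrt d ^ d : ℝ) : ℂ) := by
          rw [← hfact]; ring
      _ = ∑ k : Fin d → Fin m, P k * (((Real.sqrt d ^ d : ℝ) : ℂ) *
            ∑ σ : Equiv.Perm (Fin d), D (k ∘ σ)) := by
          rw [Finset.sum_mul]
          exact Finset.sum_congr rfl fun k _ => by ring
      _ = ∑ k : Fin d → Fin m, P k * (((d.factorial : ℝ) : ℂ) * tauTensor d m a k) := by
          exact Finset.sum_congr rfl fun k _ => by rw [htau k]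
      _ = ((d.factorial : ℝ) : ℂ) * ∑ k : Fin d → Fin m, P k * tauTensor d m a k := by
          rw [Finset.mul_sum]
          exact Finset.sum_congr rfl fun k _ => by ring
      _ = ((d.factorial : ℝ) : ℂ) * ∑ c : Fin m, u c ^ d * (lam c : ℂ) := by rw [hconst]
  exact mul_left_cancel₀ hfacne key

private lemma col_orth (m : ℕ) (U : Matrix (Fin m) (Fin m) ℂ)
    (hU : U ∈ Matrix.unitaryGroup (Fin m) ℂ) (c c' : Fin m) :
    ∑ l : Fin m, (starRingEnd ℂ) (U l c') * U l c = if c' = c then 1 else 0 := by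
  have h : star U * U = 1 := hU.1
  have h2 : (star U * U) c' c = (1 : Matrix (Fin m) (Fin m) ℂ) c' c := by rw [h]
  rw [Matrix.mul_apply, Matrix.one_apply] at h2
  simpa [Matrix.star_apply] using h2

private lemma col_sq_sum (m : ℕ) (U : Matrix (Fin m) (Fin m) ℂ)
    (hU : U ∈ Matrix.unitaryGroup (Fin m) ℂ) (c : Fin m) :
    ∑ l : Fin m, ‖U l c‖ ^ 2 = 1 := by
  have h := col_orth m U hU c c
  simp only [if_true, eq_self_iff_true, ite_true] at h
  have h2 : ∑ l : Fin m, ((Complex.normSq (U l c) : ℝ) : ℂ) = 1 := by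
    rw [← h]
    refine Finset.sum_congr rfl fun l _ => ?_
    rw [mul_comm, Complex.mul_conj]
  have h3 : ((∑ l : Fin m, Complex.normSq (U l c) : ℝ) : ℂ) = ((1 : ℝ) : ℂ) := by
    push_cast
    simpa using h2
  have h4 := Complex.ofReal_injective h3
  rw [← h4]
  exact Finset.sum_congr rfl fun l _ => Complex.sq_norm (U l c)

private lemma unitary_l2 (m : ℕ) (U : Matrix (Fin m) (Fin m) ℂ)
    (hU : U ∈ Matrix.unitaryGroup (Fin m) ℂ) (lam : Fin m → ℝ) :
    ∑ l : Fin m, ‖∑ c : Fin m, U l c * (lam c : ℂ)‖ ^ 2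
      = ∑ c : Fin m, lam c ^ 2 := by
  have key : ∑ l : Fin m,
      ((∑ c : Fin m, U l c * (lam c : ℂ)) *
        (starRingEnd ℂ) (∑ c : Fin m, U l c * (lam c : ℂ)))
      = ∑ c : Fin m, ((lam c : ℂ)) ^ 2 := by
    have expand : ∀ l : Fin m,
        (∑ c : Fin m, U l c * (lam c : ℂ)) *
          (starRingEnd ℂ) (∑ c : Fin m, U l c * (lam c : ℂ))
        = ∑ c : Fin m, ∑ c' : Fin m,
            ((starRingEnd ℂ) (U l c') * U l c) * ((lam c : ℂ) * (lam c' : ℂ)) := by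
      intro l
      rw [map_sum, Finset.sum_mul_sum]
      refine Finset.sum_congr rfl fun c _ => Finset.sum_congr rfl fun c' _ => ?_
      rw [map_mul, Complex.conj_ofReal]
      ring
    calc ∑ l : Fin m, ((∑ c : Fin m, U l c * (lam c : ℂ)) *
          (starRingEnd ℂ) (∑ c : Fin m, U l c * (lam c : ℂ)))
        = ∑ l : Fin m, ∑ c : Fin m, ∑ c' : Fin m,
            ((starRingEnd ℂ) (U l c') * U l c) * ((lam c : ℂ) * (lam c' : ℂ)) :=
          Finset.sum_congr rfl fun l _ => expand l
      _ = ∑ c : Fin m, ∑ c' : Fin m, ∑ l : Fin m,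
            ((starRingEnd ℂ) (U l c') * U l c) * ((lam c : ℂ) * (lam c' : ℂ)) := by
          rw [Finset.sum_comm]
          refine Finset.sum_congr rfl fun c _ => Finset.sum_comm
      _ = ∑ c : Fin m, ∑ c' : Fin m,
            (if c' = c then (1:ℂ) else 0) * ((lam c : ℂ) * (lam c' : ℂ)) := by
          refine Finset.sum_congr rfl fun c _ => Finset.sum_congr rfl fun c' _ => ?_
          rw [← Finset.sum_mul, col_orth m U hU c c']
      _ = ∑ c : Fin m, ((lam c : ℂ)) ^ 2 := by
          refine Finset.sum_congr rfl fun c _ => ?_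
          simp [Finset.sum_ite_eq, sq]
  have h2 : ((∑ l : Fin m, ‖∑ c : Fin m, U l c * (lam c : ℂ)‖ ^ 2 : ℝ) : ℂ)
      = ((∑ c : Fin m, lam c ^ 2 : ℝ) : ℂ) := by
    push_cast
    rw [← key]
    refine Finset.sum_congr rfl fun l _ => ?_
    rw [Complex.mul_conj, ← Complex.sq_norm]
    norm_cast
  exact_mod_cast h2

/-- **Theorem 4 (G-concurrence of assistance).** If the τ-tensor of the family `a` is
diagonal with nonnegative real diagonal entries `λ_k`, then `∑_k λ_k^{2/d}` is the
greatest value of the total G-concurrence `∑_l d |det (∑_k U_{lk} a^{(k)})|^{2/d}` over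
all unitary changes of decomposition `U`; in particular the bound is attained at `U = 1`. -/
theorem gConcurrence_of_assistance_eq
    (d m : ℕ) (hd : 1 ≤ d) (hm : 1 ≤ m)
    (a : Fin m → Matrix (Fin d) (Fin d) ℂ) (lam : Fin m → ℝ)
    (hlam : ∀ k, 0 ≤ lam k)
    (hdiag : ∀ c : Fin m, tauTensor d m a (fun _ => c) = (lam c : ℂ))
    (hoff : ∀ k : Fin d → Fin m, (∃ i j, k i ≠ k j) → tauTensor d m a k = 0) :
    IsGreatest
      {x : ℝ | ∃ U ∈ Matrix.unitaryGroup (Fin m) ℂ,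
        x = ∑ l : Fin m,
              (d : ℝ) * ‖(∑ k : Fin m, U l k • a k).det‖ ^ ((2 : ℝ) / d)}
      (∑ k : Fin m, lam k ^ ((2 : ℝ) / d)) := by
  classical
  have hdpos : (0:ℝ) < d := by exact_mod_cast hd
  have hd0 : (d:ℝ) ≠ 0 := hdpos.ne'
  set r : ℝ := (2:ℝ)/d with hrdef
  have hrpos : 0 < r := div_pos two_pos hdpos
  set sd : ℝ := Real.sqrt d ^ d with hsddef
  have hsdpos : 0 < sd := pow_pos (Real.sqrt_pos.2 hdpos) d
  have hdr : (d:ℝ) * r = 2 := by rw [hrdef]; field_simp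
  have hpow2 : ∀ x : ℝ, 0 ≤ x → (x ^ d) ^ r = x ^ 2 := by
    intro x hx
    rw [← Real.rpow_natCast x d, ← Real.rpow_mul hx, hdr,
      show (2:ℝ) = ((2:ℕ):ℝ) by norm_num, Real.rpow_natCast]
  have hsdr : sd ^ r = (d:ℝ) := by
    rw [hsddef, hpow2 _ (Real.sqrt_nonneg _), Real.sq_sqrt hdpos.le]
  -- determinant of each a l
  have hdetA : ∀ l : Fin m, ‖(a l).det‖ = lam l / sd := by
    intro l
    have h := hdiag l
    unfold tauTensor at h
    have h1 : ∀ σ : Equiv.Perm (Fin d),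
        (Matrix.of fun i j => a ((fun _ : Fin d => l) (σ i)) i j).det = (a l).det :=
      fun σ => rfl
    rw [Finset.sum_congr rfl fun σ _ => h1 σ, Finset.sum_const, Finset.card_univ,
      Fintype.card_perm, Fintype.card_fin, nsmul_eq_mul] at h
    have hfac : ((d.factorial : ℕ) : ℂ) ≠ 0 := Nat.cast_ne_zero.2 (Nat.factorial_ne_zero d)
    have h2 : (a l).det * ((sd : ℝ) : ℂ) = (lam l : ℂ) := by
      rw [← h, hsddef]
      push_cast
      field_simp
    have h3 := congrArg (‖·‖) h2
    rw [norm_mul, Complex.norm_real, Real.norm_eq_abs, abs_of_pos hsdpos, Complex.norm_real, Real.norm_eq_abs,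
      abs_of_nonneg (hlam l)] at h3
    rw [eq_div_iff hsdpos.ne']
    exact h3
  -- determinant formula for a row of a unitary
  have habs : ∀ (U : Matrix (Fin m) (Fin m) ℂ) (l : Fin m),
      ‖(∑ k : Fin m, U l k • a k).det‖
        = ‖∑ c : Fin m, U l c ^ d * (lam c : ℂ)‖ / sd := by
    intro U l
    have h := det_formula d m hd a lam hdiag hoff (fun c => U l c)
    have h2 := congrArg (‖·‖) h
    rw [norm_mul, Complex.norm_real, Real.norm_eq_abs] at h2
    rw [hsddef] at *
    rw [abs_of_pos hsdpos] at h2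
    rw [eq_div_iff hsdpos.ne']
    exact h2
  constructor
  · -- membership : attained at U = 1
    refine ⟨1, one_mem _, ?_⟩
    have hb : ∀ l : Fin m,
        (∑ k : Fin m, (1 : Matrix (Fin m) (Fin m) ℂ) l k • a k) = a l := by
      intro l
      have : ∀ k : Fin m, (1 : Matrix (Fin m) (Fin m) ℂ) l k • a k
          = if l = k then a k else 0 := by
        intro k
        rw [Matrix.one_apply]
        by_cases hlk : l = k <;> simp [hlk]
      rw [Finset.sum_congr rfl fun k _ => this k, Finset.sum_ite_eq]
      simp
    refine (Finset.sum_congr rfl fun l _ => ?_).symm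
    rw [hb l, hdetA l, Real.div_rpow (hlam l) hsdpos.le, hsdr]
    field_simp
  · -- upper bound
    rintro x ⟨U, hU, rfl⟩
    by_cases hd1 : d = 1
    · -- the case d = 1 : exact computation by unitarity
      subst hd1
      have hr2 : r = 2 := by rw [hrdef]; norm_num
      have hsd1 : sd = 1 := by rw [hsddef]; simp
      have hE : ∀ l : Fin m,
          (1 : ℝ) * ‖(∑ k : Fin m, U l k • a k).det‖ ^ r
            = ‖∑ c : Fin m, U l c * (lam c : ℂ)‖ ^ 2 := by
        intro l
        rw [one_mul, habs U l, hsd1, div_one, hr2]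
        rw [show ∀ z : ℂ, ‖z‖ ^ (2:ℝ) = ‖z‖ ^ 2 by
          intro z
          rw [show (2:ℝ) = ((2:ℕ):ℝ) by norm_num, Real.rpow_natCast]]
        congr 2
        exact Finset.sum_congr rfl fun c _ => by rw [pow_one]
      calc ∑ l : Fin m, (1:ℕ) * ‖(∑ k : Fin m, U l k • a k).det‖ ^ r
          = ∑ l : Fin m, ‖∑ c : Fin m, U l c * (lam c : ℂ)‖ ^ 2 := by
            refine Finset.sum_congr rfl fun l _ => ?_
            rw [← hE l]
            norm_num
        _ = ∑ c : Fin m, lam c ^ 2 := unitary_l2 m U hU lam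
        _ = ∑ c : Fin m, lam c ^ r := by
            refine Finset.sum_congr rfl fun c _ => ?_
            rw [hr2, show (2:ℝ) = ((2:ℕ):ℝ) by norm_num, Real.rpow_natCast]
        _ ≤ ∑ k : Fin m, lam k ^ r := le_refl _
    · -- the case d ≥ 2 : concavity-type estimates
      have hd2 : 2 ≤ d := by omega
      have hr1 : r ≤ 1 := by
        rw [hrdef, div_le_one hdpos]
        exact_mod_cast hd2
      calc ∑ l : Fin m, (d:ℝ) * ‖(∑ k : Fin m, U l k • a k).det‖ ^ r
          ≤ ∑ l : Fin m, ∑ c : Fin m, ‖U l c‖ ^ 2 * lam c ^ r := by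
            refine Finset.sum_le_sum fun l _ => ?_
            set B : ℝ := ∑ c : Fin m, ‖U l c‖ ^ d * lam c with hBdef
            have hBnn : 0 ≤ B :=
              Finset.sum_nonneg fun c _ => mul_nonneg (pow_nonneg (norm_nonneg _) d)
                (hlam c)
            have hAB : ‖∑ c : Fin m, U l c ^ d * (lam c : ℂ)‖ ≤ B := by
              refine (norm_sum_le _ _).trans ?_
              refine le_of_eq (Finset.sum_congr rfl fun c _ => ?_)
              rw [norm_mul, norm_pow, Complex.norm_real, Real.norm_eq_abs, abs_of_nonneg (hlam c)]
            have step1 : (d:ℝ) * ‖(∑ k : Fin m, U l k • a k).det‖ ^ r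
                ≤ (d:ℝ) * (B / sd) ^ r := by
              rw [habs U l]
              have := Real.rpow_le_rpow
                (div_nonneg (norm_nonneg _) hsdpos.le)
                (div_le_div_of_nonneg_right hAB hsdpos.le) hrpos.le
              exact mul_le_mul_of_nonneg_left this hdpos.le
            have step2 : (d:ℝ) * (B / sd) ^ r = B ^ r := by
              rw [Real.div_rpow hBnn hsdpos.le, hsdr]
              field_simp
            have step3 : B ^ r ≤ ∑ c : Fin m, (‖U l c‖ ^ d * lam c) ^ r :=
              rpow_sum_le_sum_rpow' _ _
                (fun c _ => mul_nonneg (pow_nonneg (norm_nonneg _) d) (hlam c))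
                hrpos hr1
            have step4 : ∑ c : Fin m, (‖U l c‖ ^ d * lam c) ^ r
                = ∑ c : Fin m, ‖U l c‖ ^ 2 * lam c ^ r := by
              refine Finset.sum_congr rfl fun c _ => ?_
              rw [Real.mul_rpow (pow_nonneg (norm_nonneg _) d) (hlam c),
                hpow2 _ (norm_nonneg _)]
            calc (d:ℝ) * ‖(∑ k : Fin m, U l k • a k).det‖ ^ r
                ≤ (d:ℝ) * (B / sd) ^ r := step1
              _ = B ^ r := step2
              _ ≤ ∑ c : Fin m, (‖U l c‖ ^ d * lam c) ^ r := step3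
              _ = ∑ c : Fin m, ‖U l c‖ ^ 2 * lam c ^ r := step4
        _ = ∑ c : Fin m, lam c ^ r := by
            rw [Finset.sum_comm]
            refine Finset.sum_congr rfl fun c _ => ?_
            rw [← Finset.sum_mul, col_sq_sum m U hU c, one_mul]
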